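/- For every n ∈ ℕ with n ≥ 2, there exists a finite non-commutative Clifford semigroup S such that the chromatic number of the commuting graph of S equals n. -/

import Mathlib

/-- The commuting graph of a (non-commutative) semigroup: vertices are the
non-central elements, two distinct vertices are adjacent iff they commute. -/
def commGraph (S : Type*) [Mul S] : SimpleGraph {x : S // x ∉ Set.center S} where
  Adj a b := a ≠ b ∧ (a : S) * b = (b : S) * a
  symm := ⟨fun a b h => ⟨h.1.symm, h.2.symm⟩⟩
  loopless := ⟨fun a h => h.1 rfl⟩

namespace CliffordCG

abbrev P3 := Equiv.Perm (Fin 3)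

def tP : P3 := Equiv.swap 0 1
def rP : P3 := Equiv.swap 0 1 * Equiv.swap 0 2
def uP : P3 := Equiv.swap 0 2

def phi2 (x : ZMod 2) : P3 := if x = 0 then 1 else tP

lemma phi2_add : ∀ x y : ZMod 2, phi2 (x + y) = phi2 x * phi2 y := by decide

lemma phi2_zero : phi2 0 = 1 := by decide
lemma phi2_one : phi2 1 = tP := by decide

/-- The Clifford semigroup: a strong semilattice of the groups `ZMod (2k)` (top)
and `S₃` (bottom), glued along the hom sending `1 ↦ (0 1)`. -/
abbrev Sg (k : ℕ) : Type := Sum (ZMod (2 * k)) P3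

def cmap (k : ℕ) : ZMod (2 * k) →+* ZMod 2 := ZMod.castHom (dvd_mul_right 2 k) (ZMod 2)

def fmap {k : ℕ} (a : ZMod (2 * k)) : P3 := phi2 (cmap k a)

lemma fmap_add {k : ℕ} (a b : ZMod (2 * k)) : fmap (a + b) = fmap a * fmap b := by
  unfold fmap; rw [map_add, phi2_add]

instance (k : ℕ) : Mul (Sg k) :=
  ⟨fun x y => match x, y with
    | .inl a, .inl b => .inl (a + b)
    | .inl a, .inr h => .inr (fmap a * h)
    | .inr h, .inl a => .inr (h * fmap a)
    | .inr h, .inr g => .inr (h * g)⟩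

@[simp] lemma inl_mul_inl {k : ℕ} (a b : ZMod (2 * k)) :
    ((Sum.inl a : Sg k) * Sum.inl b) = Sum.inl (a + b) := rfl
@[simp] lemma inl_mul_inr {k : ℕ} (a : ZMod (2 * k)) (h : P3) :
    ((Sum.inl a : Sg k) * Sum.inr h) = Sum.inr (fmap a * h) := rfl
@[simp] lemma inr_mul_inl {k : ℕ} (a : ZMod (2 * k)) (h : P3) :
    ((Sum.inr h : Sg k) * Sum.inl a) = Sum.inr (h * fmap a) := rfl
@[simp] lemma inr_mul_inr {k : ℕ} (h g : P3) :
    ((Sum.inr h : Sg k) * Sum.inr g) = Sum.inr (h * g) := rfl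

instance (k : ℕ) : Semigroup (Sg k) :=
  { (inferInstance : Mul (Sg k)) with
    mul_assoc := by
      rintro (a | h) (b | g) (c | j) <;>
        simp [add_assoc, mul_assoc, fmap_add] }

instance (k : ℕ) : Inv (Sg k) :=
  ⟨fun x => match x with
    | .inl a => .inl (-a)
    | .inr h => .inr h⁻¹⟩

@[simp] lemma inl_inv {k : ℕ} (a : ZMod (2 * k)) : (Sum.inl a : Sg k)⁻¹ = Sum.inl (-a) := rfl
@[simp] lemma inr_inv {k : ℕ} (h : P3) : (Sum.inr h : Sg k)⁻¹ = Sum.inr h⁻¹ := rfl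

instance (k : ℕ) [NeZero (2 * k)] : Fintype (Sg k) :=
  inferInstanceAs (Fintype (Sum (ZMod (2 * k)) P3))

instance (k : ℕ) : DecidableEq (Sg k) :=
  inferInstanceAs (DecidableEq (Sum (ZMod (2 * k)) P3))

lemma central_inl {k : ℕ} (a : ZMod (2 * k)) (ha : cmap k a = 0) :
    Sum.inl a ∈ Set.center (Sg k) := by
  rw [Semigroup.mem_center_iff]
  rintro (b | h)
  · simp [add_comm]
  · have : fmap a = 1 := by unfold fmap; rw [ha, phi2_zero]
    simp [this]

lemma central_inr_one {k : ℕ} : (Sum.inr 1 : Sg k) ∈ Set.center (Sg k) := by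
  rw [Semigroup.mem_center_iff]
  rintro (b | h) <;> simp

lemma not_central_inl {k : ℕ} (a : ZMod (2 * k)) (ha : cmap k a ≠ 0) :
    Sum.inl a ∉ Set.center (Sg k) := by
  rw [Semigroup.mem_center_iff]
  intro hc
  have h1 : cmap k a = 1 := by
    have : ∀ x : ZMod 2, x ≠ 0 → x = 1 := by decide
    exact this _ ha
  have hf : fmap a = tP := by unfold fmap; rw [h1, phi2_one]
  have := hc (Sum.inr rP)
  rw [inr_mul_inl, inl_mul_inr, hf] at this
  have h2 : rP * tP = tP * rP := Sum.inr.inj this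
  revert h2; decide

lemma not_central_inr {k : ℕ} (h : P3) (hh : h ≠ 1) :
    Sum.inr h ∉ Set.center (Sg k) := by
  rw [Semigroup.mem_center_iff]
  intro hc
  have : ∀ h : P3, h ≠ 1 → ∃ g : P3, ¬ g * h = h * g := by decide
  obtain ⟨g, hg⟩ := this h hh
  have := hc (Sum.inr g)
  rw [inr_mul_inr, inr_mul_inr] at this
  exact hg (Sum.inr.inj this)

lemma val_cmap {k : ℕ} [NeZero (2 * k)] (a : ZMod (2 * k)) :
    (cmap k a).val = a.val % 2 := by
  have : cmap k a = ((a.val : ℕ) : ZMod 2) := by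
    rw [cmap, ZMod.castHom_apply, ZMod.natCast_val]
  rw [this, ZMod.val_natCast]

lemma odd_of_not_central {k : ℕ} [NeZero (2 * k)] (a : ZMod (2 * k))
    (ha : Sum.inl a ∉ Set.center (Sg k)) : a.val % 2 = 1 := by
  have h0 : cmap k a ≠ 0 := fun h => ha (central_inl a h)
  have h1 : cmap k a = 1 := by
    have : ∀ x : ZMod 2, x ≠ 0 → x = 1 := by decide
    exact this _ h0
  have := val_cmap a
  rw [h1] at this
  rw [← this]; rfl

lemma ne_one_of_not_central {k : ℕ} (h : P3)
    (hh : Sum.inr h ∉ Set.center (Sg k)) : h ≠ 1 := by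
  rintro rfl; exact hh central_inr_one

lemma fmap_eq_tP_of_odd {k : ℕ} [NeZero (2 * k)] (a : ZMod (2 * k))
    (ha : a.val % 2 = 1) : fmap a = tP := by
  have h1 : cmap k a = 1 := by
    apply ZMod.val_injective
    rw [val_cmap, ha]; rfl
  unfold fmap; rw [h1, phi2_one]

section Main

variable (k : ℕ) [NeZero (2 * k)]

/-- the coloring function -/
def colr (hk : 1 ≤ k) : Sg k → Fin (k + 1) :=
  fun x => match x with
    | Sum.inl a => ⟨a.val / 2, by have := ZMod.val_lt a; omega⟩
    | Sum.inr h =>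
        if h = tP then ⟨k, by omega⟩
        else if h = rP then ⟨0, by omega⟩ else ⟨1, by omega⟩

variable (hk : 1 ≤ k)

lemma colr_inl (a : ZMod (2 * k)) : colr k hk (Sum.inl a) = ⟨a.val / 2, by have := ZMod.val_lt a; omega⟩ := rfl
lemma colr_inr (h : P3) : colr k hk (Sum.inr h)
    = if h = tP then ⟨k, by omega⟩
      else if h = rP then (⟨0, by omega⟩ : Fin (k+1)) else ⟨1, by omega⟩ := rfl

lemma chrom_le (hk : 1 ≤ k) : (commGraph (Sg k)).chromaticNumber ≤ ((k + 1 : ℕ) : ℕ∞) := by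
  have C : (commGraph (Sg k)).Coloring (Fin (k + 1)) := by
    apply SimpleGraph.Coloring.mk (fun v => colr k hk v.1)
    rintro ⟨x, hx⟩ ⟨y, hy⟩ ⟨hne, hcomm⟩
    have hne' : x ≠ y := fun h => hne (Subtype.ext h)
    rcases x with a | h <;> rcases y with b | g
    · -- inl, inl
      have ha := odd_of_not_central a hx
      have hb := odd_of_not_central b hy
      simp only [colr_inl]
      intro hcol
      have : a.val / 2 = b.val / 2 := by simpa [Fin.mk.injEq] using hcol
      have : a.val = b.val := by omega
      exact hne' (congrArg Sum.inl (ZMod.val_injective _ this))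
    · -- inl, inr
      have ha := odd_of_not_central a hx
      have hg := ne_one_of_not_central g hy
      rw [inl_mul_inr, inr_mul_inl, fmap_eq_tP_of_odd a ha] at hcomm
      have hcg : tP * g = g * tP := Sum.inr.inj hcomm
      have : g = tP := by
        have key : ∀ g : P3, tP * g = g * tP → g ≠ 1 → g = tP := by decide
        exact key g hcg hg
      subst this
      simp only [colr_inl, colr_inr, if_pos rfl]
      intro hcol
      have : a.val / 2 = k := by simpa [Fin.mk.injEq] using hcol
      have := ZMod.val_lt a
      omega
    · -- inr, inl
      have hb := odd_of_not_central b hy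
      have hh := ne_one_of_not_central h hx
      rw [inl_mul_inr, inr_mul_inl, fmap_eq_tP_of_odd b hb] at hcomm
      have hch : tP * h = h * tP := (Sum.inr.inj hcomm).symm
      have : h = tP := by
        have key : ∀ g : P3, tP * g = g * tP → g ≠ 1 → g = tP := by decide
        exact key h hch hh
      subst this
      simp only [colr_inl, colr_inr, if_pos rfl]
      intro hcol
      have : k = b.val / 2 := by simpa [Fin.mk.injEq] using hcol
      have := ZMod.val_lt b
      omega
    · -- inr, inr
      have hh := ne_one_of_not_central h hx
      have hg := ne_one_of_not_central g hy
      have hne2 : h ≠ g := fun e => hne' (congrArg Sum.inr e)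
      have hcomm2 : h * g = g * h := Sum.inr.inj hcomm
      have key : ∀ h g : P3, h * g = g * h → h ≠ g → h ≠ 1 → g ≠ 1 →
          (h = rP ∧ g ≠ tP ∧ g ≠ rP) ∨ (g = rP ∧ h ≠ tP ∧ h ≠ rP) := by decide
      have hrtP : rP ≠ tP := by decide
      rcases key h g hcomm2 hne2 hh hg with ⟨rfl, h1, h2⟩ | ⟨rfl, h1, h2⟩ <;>
        simp [colr_inr, hrtP, h1, h2, Fin.ext_iff]
  exact (SimpleGraph.Colorable.chromaticNumber_le ⟨C⟩)

lemma odd_val (j : ℕ) : (((2 * j + 1 : ℕ) : ZMod (2 * k))).val % 2 = 1 := by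
  rw [ZMod.val_natCast, Nat.mod_mod_of_dvd _ (dvd_mul_right 2 k)]
  omega

lemma not_central_odd (j : ℕ) :
    (Sum.inl ((2 * j + 1 : ℕ) : ZMod (2 * k)) : Sg k) ∉ Set.center (Sg k) := by
  apply not_central_inl
  intro h0
  have h1 := val_cmap (k := k) ((2 * j + 1 : ℕ) : ZMod (2 * k))
  rw [h0, odd_val] at h1
  simp [ZMod.val_zero] at h1

/-- the clique vertices -/
def wv (_hk : 1 ≤ k) : Fin (k + 1) → {x : Sg k // x ∉ Set.center (Sg k)} :=
  fun i =>
    if h : (i : ℕ) < k then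
      ⟨Sum.inl ((2 * (i : ℕ) + 1 : ℕ) : ZMod (2 * k)), not_central_odd k i⟩
    else ⟨Sum.inr tP, not_central_inr tP (by decide)⟩

lemma wv_injective (hk : 1 ≤ k) : Function.Injective (wv k hk) := by
  intro i j hij
  unfold wv at hij
  by_cases hi : (i : ℕ) < k <;> by_cases hj : (j : ℕ) < k
  · rw [dif_pos hi, dif_pos hj] at hij
    have h1 : ((2 * (i : ℕ) + 1 : ℕ) : ZMod (2 * k)) = ((2 * (j : ℕ) + 1 : ℕ) : ZMod (2 * k)) :=
      Sum.inl.inj (Subtype.ext_iff.mp hij)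
    have h2 := congrArg ZMod.val h1
    rw [ZMod.val_natCast, ZMod.val_natCast, Nat.mod_eq_of_lt (by omega),
      Nat.mod_eq_of_lt (by omega)] at h2
    exact Fin.ext (by omega)
  · rw [dif_pos hi, dif_neg hj] at hij
    exact absurd (Subtype.ext_iff.mp hij) (by simp)
  · rw [dif_neg hi, dif_pos hj] at hij
    exact absurd (Subtype.ext_iff.mp hij) (by simp)
  · have hi' := i.isLt
    have hj' := j.isLt
    exact Fin.ext (by omega)

lemma wv_adj (hk : 1 ≤ k) (i j : Fin (k + 1)) (hij : wv k hk i ≠ wv k hk j) :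
    (commGraph (Sg k)).Adj (wv k hk i) (wv k hk j) := by
  refine ⟨hij, ?_⟩
  unfold wv
  by_cases hi : (i : ℕ) < k <;> by_cases hj : (j : ℕ) < k
  · rw [dif_pos hi, dif_pos hj]
    simp [add_comm]
  · rw [dif_pos hi, dif_neg hj]
    simp only [inl_mul_inr, inr_mul_inl]
    rw [fmap_eq_tP_of_odd _ (odd_val k i)]
  · rw [dif_neg hi, dif_pos hj]
    simp only [inl_mul_inr, inr_mul_inl]
    rw [fmap_eq_tP_of_odd _ (odd_val k j)]
  · exact absurd (by unfold wv; rw [dif_neg hi, dif_neg hj]) hij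

lemma le_chrom (hk : 1 ≤ k) : ((k + 1 : ℕ) : ℕ∞) ≤ (commGraph (Sg k)).chromaticNumber := by
  have hclique : (commGraph (Sg k)).IsClique
      (↑(Finset.image (wv k hk) Finset.univ) : Set _) := by
    intro u hu v hv huv
    simp only [Finset.coe_image, Set.mem_image, Finset.mem_coe, Finset.coe_univ,
      Set.image_univ, Set.mem_range] at hu hv
    obtain ⟨i, rfl⟩ := hu
    obtain ⟨j, rfl⟩ := hv
    exact wv_adj k hk i j huv
  have hcard : (Finset.image (wv k hk) Finset.univ).card = k + 1 := by
    rw [Finset.card_image_of_injective _ (wv_injective k hk), Finset.card_univ,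
      Fintype.card_fin]
  have := hclique.card_le_chromaticNumber
  rwa [hcard] at this

end Main

end CliffordCG

theorem exists_clifford_semigroup_chromaticNumber_eq (n : ℕ) (hn : 2 ≤ n) :
    ∃ (S : Type) (_ : Semigroup S) (_ : Fintype S) (_ : Inv S),
      -- `S` is a Clifford semigroup
      (∀ x : S, x⁻¹⁻¹ = x) ∧
      (∀ x : S, x * x⁻¹ * x = x) ∧
      (∀ x : S, x⁻¹ * x = x * x⁻¹) ∧
      (∀ e : S, e * e = e → ∀ y : S, e * y = y * e) ∧
      -- `S` is non-commutative
      (∃ a b : S, a * b ≠ b * a) ∧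
      -- and the chromatic number of its commuting graph is `n`
      (commGraph S).chromaticNumber = (n : ℕ∞) := by
  haveI : NeZero (2 * (n - 1)) := ⟨by omega⟩
  refine ⟨CliffordCG.Sg (n - 1), inferInstance, inferInstance, inferInstance,
    ?_, ?_, ?_, ?_, ?_, ?_⟩
  · rintro (a | h) <;> simp
  · rintro (a | h) <;> simp
  · rintro (a | h) <;> simp
  · rintro (a | h) he y
    · have h0 : a = 0 := by
        have h' := Sum.inl.inj he
        linear_combination h'
      subst h0
      exact (Semigroup.mem_center_iff.mp
        (CliffordCG.central_inl 0 (map_zero _)) y).symm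
    · have h0 : h = 1 := mul_eq_left.mp (Sum.inr.inj he)
      subst h0
      exact (Semigroup.mem_center_iff.mp CliffordCG.central_inr_one y).symm
  · refine ⟨Sum.inr CliffordCG.tP, Sum.inr CliffordCG.uP, ?_⟩
    rw [CliffordCG.inr_mul_inr, CliffordCG.inr_mul_inr]
    intro h
    have := Sum.inr.inj h
    revert this
    decide
  · have h1 := CliffordCG.chrom_le (n - 1) (by omega)
    have h2 := CliffordCG.le_chrom (n - 1) (by omega)
    have h3 : n - 1 + 1 = n := by omega
    rw [h3] at h1 h2
    exact le_antisymm h1 h2
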